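/- Every J-circuit that is undominated with respect to (J, ∅) (i.e., minimal in the componentwise order among J-circuits) is produced by the greedy procedure for some ordering of J; in particular it is produced using the ordering of J by increasing assigned values. -/

import Mathlib

private lemma iterMod {α : Type*} (g : α → α) (q : α) {K : ℕ} (hK : 0 < K) (h : g^[K] q = q) :
    ∀ a, g^[a] q = g^[a % K] q := by
  intro a
  induction a using Nat.strong_induction_on with
  | _ a ih =>
    rcases lt_or_ge a K with h' | h'
    · rw [Nat.mod_eq_of_lt h']
    · obtain ⟨b, rfl⟩ := Nat.exists_eq_add_of_le h'
      rw [Nat.add_comm K b, Function.iterate_add_apply, h, ih b (by omega), Nat.add_mod_right]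

private lemma iterSwitch {α : Type*} (f g : α → α) (q : α) :
    ∀ (K : ℕ), (∀ s < K, g (g^[s] q) = f (g^[s] q)) → g^[K] q = f^[K] q := by
  intro K
  induction K with
  | zero => simp
  | succ s ih =>
    intro h
    have h1 := ih (fun u hu => h u (by omega))
    calc g^[s+1] q = g (g^[s] q) := Function.iterate_succ_apply' g s q
    _ = f (g^[s] q) := h s (by omega)
    _ = f (f^[s] q) := by rw [h1]
    _ = f^[s+1] q := (Function.iterate_succ_apply' f s q).symm

private lemma minCycle {α : Type*} (g : α → α) (J : Finset α) (q : α) (K₀ : ℕ)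
    (h0 : 0 < K₀) (hin : ∀ s < K₀, g^[s] q ∈ J) (heq : g^[K₀] q = q) :
    ∃ K, 0 < K ∧ (∀ s < K, g^[s] q ∈ J) ∧ g^[K] q = q ∧
      (∀ u, 0 < u → u < K → g^[u] q ≠ q) ∧
      (∀ a b, a < K → b < K → g^[a] q = g^[b] q → a = b) := by
  classical
  have hP : ∃ K, 0 < K ∧ (∀ s < K, g^[s] q ∈ J) ∧ g^[K] q = q := ⟨K₀, h0, hin, heq⟩
  set K := Nat.find hP with hKdef
  obtain ⟨hK0, hKin, hKeq⟩ := Nat.find_spec hP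
  have hne : ∀ u, 0 < u → u < K → g^[u] q ≠ q := by
    intro u hu0 huK hqe
    exact Nat.find_min hP huK ⟨hu0, fun s hs => hKin s (hs.trans huK), hqe⟩
  refine ⟨K, hK0, hKin, hKeq, hne, ?_⟩
  have key : ∀ a b, a < b → b < K → g^[a] q = g^[b] q → False := by
    intro a b hab hbK he
    have h1 : g^[(K - b) + a] q = q := by
      rw [Function.iterate_add_apply, he, ← Function.iterate_add_apply]
      have h2 : K - b + b = K := by omega
      rw [h2, hKeq]
    exact hne (K - b + a) (by omega) (by omega) h1
  intro a b ha hb he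
  rcases lt_trichotomy a b with h | h | h
  · exact absurd he (fun he => key a b h hb he)
  · exact h
  · exact absurd he.symm (fun he => key b a h ha he)

/-- The partial assignment `f` on `J` creates no cycle. -/
def NoCycleOn {n : ℕ} (f : Fin n → Fin n) (J : Finset (Fin n)) : Prop :=
  ¬ ∃ j ∈ J, ∃ k, 0 < k ∧ (∀ t < k, f^[t] j ∈ J) ∧ f^[k] j = j

/-- A `J`-circuit: an injective, cycle-free partial assignment on `J`. -/
def IsJCircuit {n : ℕ} (J : Finset (Fin n)) (f : Fin n → Fin n) : Prop :=
  Set.InjOn f J ∧ NoCycleOn f J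

/-- `g` dominates `f` with respect to the partition `(J₊, J₋)`. -/
def Dominates {n : ℕ} (v : Fin n → ℝ) (Jp Jm : Finset (Fin n)) (g f : Fin n → Fin n) : Prop :=
  (∃ j ∈ Jp ∪ Jm, g j ≠ f j) ∧ (∀ j ∈ Jp, v (g j) ≤ v (f j)) ∧ (∀ j ∈ Jm, v (f j) ≤ v (g j))

/-- `f` is the greedy assignment with respect to the ordering `l` of `J = J₊ ∪ J₋`. -/
def GreedyWrt {n : ℕ} (v : Fin n → ℝ) (Jp Jm : Finset (Fin n)) (l : List (Fin n))
    (f : Fin n → Fin n) : Prop :=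
  ∀ i : Fin l.length,
    (l.get i ∈ Jp →
      IsLeast (v '' {k : Fin n |
        IsJCircuit (l.take (i.1 + 1)).toFinset (Function.update f (l.get i) k)})
        (v (f (l.get i)))) ∧
    (l.get i ∈ Jm →
      IsGreatest (v '' {k : Fin n |
        IsJCircuit (l.take (i.1 + 1)).toFinset (Function.update f (l.get i) k)})
        (v (f (l.get i))))

/-- Every `J`-circuit `f` undominated with respect to `(J, ∅)` is produced by the
greedy procedure; in particular it is greedy for the ordering of `J` by
increasing assigned values. -/
theorem stmt_7 (n : ℕ) (v : Fin n → ℝ) (hv : StrictMono v)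
    (J : Finset (Fin n)) (f : Fin n → Fin n) (hf : IsJCircuit J f)
    (hund : ¬ ∃ g : Fin n → Fin n, IsJCircuit J g ∧ Dominates v J ∅ g f)
    (l : List (Fin n)) (hnd : l.Nodup) (hl : l.toFinset = J)
    (hsort : l.Pairwise fun a b => v (f a) < v (f b)) :
    GreedyWrt v J ∅ l f := by
  classical
  intro i
  refine ⟨?_, fun h => absurd h (Finset.notMem_empty _)⟩
  intro hjJ
  set j := l.get i with hjdef
  set Ji := (l.take (i.1 + 1)).toFinset with hJidef
  have hJiJ : Ji ⊆ J := by
    intro a ha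
    rw [← hl]
    exact List.mem_toFinset.mpr (List.take_subset _ _ (List.mem_toFinset.mp ha))
  have hjJi : j ∈ Ji := by
    rw [hJidef]
    apply List.mem_toFinset.mpr
    rw [List.mem_iff_getElem]
    refine ⟨i.1, by have := i.isLt; simp only [List.length_take]; omega, ?_⟩
    rw [List.getElem_take]
    simp [hjdef]
  have hgt : ∀ a, a ∈ J → a ∉ Ji → v (f j) < v (f a) := by
    intro a haJ haJi
    have hal : a ∈ l := List.mem_toFinset.mp (hl ▸ haJ)
    obtain ⟨i'', hi''⟩ := List.mem_iff_get.mp hal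
    have hii : i.1 < i''.1 := by
      by_contra hcon
      push_neg at hcon
      apply haJi
      rw [hJidef]
      apply List.mem_toFinset.mpr
      rw [List.mem_iff_getElem]
      refine ⟨i''.1, by have := i''.isLt; simp only [List.length_take]; omega, ?_⟩
      rw [List.getElem_take]
      simp [← hi'']
    have := List.pairwise_iff_get.mp hsort i i'' hii
    rw [hi''] at this
    exact this
  refine ⟨⟨f j, ?_, rfl⟩, ?_⟩
  · show IsJCircuit Ji (Function.update f j (f j))
    rw [Function.update_eq_self]
    constructor
    · exact hf.1.mono (Finset.coe_subset.mpr hJiJ)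
    · intro hcyc
      obtain ⟨a, ha, K, h1, h2, h3⟩ := hcyc
      exact hf.2 ⟨a, hJiJ ha, K, h1, fun t ht => hJiJ (h2 t ht), h3⟩
  rintro x ⟨k, hkS, rfl⟩
  simp only [Set.mem_setOf_eq] at hkS
  by_contra hcon0
  push_neg at hcon0
  have hle : v k < v (f j) := hcon0
  clear hcon0
  have hkj : k ≠ j := by
    intro h
    apply hkS.2
    refine ⟨j, hjJi, 1, one_pos, ?_, ?_⟩
    · intro t ht
      interval_cases t
      simpa using hjJi
    · simp [Function.update_self, h]
  have hfjj : f j ≠ j := by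
    intro h
    exact hf.2 ⟨j, hjJ, 1, one_pos, fun t ht => by interval_cases t; simpa using hjJ,
      by simpa using h⟩
  have hkfj : k ≠ f j := by
    intro h
    rw [h] at hle
    exact lt_irrefl _ hle
  have hkne : ∀ a, a ∈ J → a ≠ j → f a ≠ k := by
    intro a haJ haj he
    by_cases hJa : a ∈ Ji
    · apply haj
      apply hkS.1 (Finset.mem_coe.mpr hJa) (Finset.mem_coe.mpr hjJi)
      rw [Function.update_of_ne haj, Function.update_self, he]
    · have h1 := hgt a haJ hJa
      rw [he] at h1
      exact absurd (h1.trans hle) (lt_irrefl _)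
  by_cases hpath : ∃ m, (∀ s ≤ m, f^[s] k ∈ J) ∧ f^[m] k = j
  · -- there is an f-path from k to j within J
    have hmP : ∃ m, (∀ s ≤ m, f^[s] k ∈ J) ∧ f^[m] k = j := hpath
    set m := Nat.find hmP with hmdef
    obtain ⟨hmin, hmeq⟩ := Nat.find_spec hmP
    rw [← hmdef] at hmin hmeq
    have hpj : ∀ s, s < m → f^[s] k ≠ j := by
      intro s hs hc
      exact Nat.find_min hmP hs ⟨fun s' hs' => hmin s' (by omega), hc⟩
    have hm0 : 0 < m := by
      rcases Nat.eq_zero_or_pos m with h | h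
      · exfalso
        rw [h] at hmeq
        simp only [Function.iterate_zero, id_eq] at hmeq
        exact hkj hmeq
      · exact h
    have pinj : ∀ a b, a ≤ m → b ≤ m → f^[a] k = f^[b] k → a = b := by
      have key : ∀ a b, a < b → b ≤ m → f^[a] k = f^[b] k → False := by
        intro a b hab hbm he
        apply hf.2
        refine ⟨f^[a] k, hmin a (by omega), b - a, by omega, ?_, ?_⟩
        · intro u hu
          rw [← Function.iterate_add_apply]
          exact hmin (u + a) (by omega)
        · rw [← Function.iterate_add_apply, show b - a + a = b by omega, ← he]
      intro a b ha hb he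
      rcases lt_trichotomy a b with h | h | h
      · exact absurd he (fun he => key a b h hb he)
      · exact h
      · exact absurd he.symm (fun he => key b a h ha he)
    have hexT : ∃ t, t < m ∧ f^[t] k ∉ Ji := by
      by_contra hc
      push_neg at hc
      apply hkS.2
      have upd_iter : ∀ s, s ≤ m → (Function.update f j k)^[s] k = f^[s] k := by
        intro s hs
        exact (iterSwitch (Function.update f j k) f k s (fun u hu =>
          (Function.update_of_ne (hpj u (by omega)) k f).symm)).symm
      refine ⟨j, hjJi, m + 1, by omega, ?_, ?_⟩
      · intro u hu
        rcases Nat.eq_zero_or_pos u with h0 | h0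
        · rw [h0]
          simpa using hjJi
        · have h1 : (Function.update f j k)^[u] j = f^[u-1] k := by
            rw [show u = (u-1)+1 by omega, Function.iterate_succ_apply, Function.update_self]
            exact upd_iter (u-1) (by omega)
          rw [h1]
          exact hc (u-1) (by omega)
      · rw [Function.iterate_succ_apply, Function.update_self, upd_iter m le_rfl, hmeq]
    set t := Nat.find hexT with htdef
    obtain ⟨htm, htJi⟩ := Nat.find_spec hexT
    have htmin : ∀ s, s < t → f^[s] k ∈ Ji := by
      intro s hs
      by_contra hc
      exact Nat.find_min hexT hs ⟨by omega, hc⟩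
    set pt := f^[t] k with hptdef
    have hptJ : pt ∈ J := hmin t (by omega)
    have hptj : pt ≠ j := hpj t htm
    have hvpt : v (f j) < v (f pt) := hgt pt hptJ htJi
    set g := Function.update (Function.update f j k) pt (f j) with hgdef
    have hgj : g j = k := by
      rw [hgdef, Function.update_of_ne (Ne.symm hptj), Function.update_self]
    have hgpt : g pt = f j := by
      rw [hgdef, Function.update_self]
    have hga : ∀ a, a ≠ j → a ≠ pt → g a = f a := by
      intro a h1 h2
      rw [hgdef, Function.update_of_ne h2, Function.update_of_ne h1]
    apply hund
    refine ⟨g, ⟨?_, ?_⟩, ⟨j, Finset.mem_union_left _ hjJ, by rw [hgj]; exact hkfj⟩, ?_, ?_⟩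
    · -- injectivity
      intro a ha b hb hab
      by_cases haj : a = j <;> by_cases hbj : b = j
      · rw [haj, hbj]
      · exfalso
        subst haj
        by_cases hbp : b = pt
        · subst hbp
          rw [hgj, hgpt] at hab
          exact hkfj hab
        · rw [hgj, hga b hbj hbp] at hab
          exact hkne b (Finset.mem_coe.mp hb) hbj hab.symm
      · exfalso
        subst hbj
        by_cases hap : a = pt
        · subst hap
          rw [hgpt, hgj] at hab
          exact hkfj hab.symm
        · rw [hga a haj hap, hgj] at hab
          exact hkne a (Finset.mem_coe.mp ha) haj hab
      · by_cases hap : a = pt <;> by_cases hbp : b = pt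
        · rw [hap, hbp]
        · exfalso
          subst hap
          rw [hgpt, hga b hbj hbp] at hab
          exact hbj (hf.1 hb (Finset.mem_coe.mpr hjJ) hab.symm)
        · exfalso
          subst hbp
          rw [hga a haj hap, hgpt] at hab
          exact haj (hf.1 ha (Finset.mem_coe.mpr hjJ) hab)
        · rw [hga a haj hap, hga b hbj hbp] at hab
          exact hf.1 ha hb hab
    · -- no cycle
      intro hcyc
      obtain ⟨q, hqJ, K₀, hK₀, hinJ, hqeq⟩ := hcyc
      by_cases hjo : ∃ u, u < K₀ ∧ g^[u] q = j
      · -- the cycle passes through j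
        obtain ⟨u, huK, hu⟩ := hjo
        have hjeq : g^[K₀] j = j := by
          rw [← hu, ← Function.iterate_add_apply, Nat.add_comm K₀ u,
            Function.iterate_add_apply, hqeq]
        have hjin : ∀ s, s < K₀ → g^[s] j ∈ J := by
          intro s hs
          rw [← hu, ← Function.iterate_add_apply, iterMod g q hK₀ hqeq (s + u)]
          exact hinJ _ (Nat.mod_lt _ hK₀)
        obtain ⟨K, hK0, hKin, hKeq, hKne, hKdist⟩ := minCycle g J j K₀ hK₀ hjin hjeq
        have step1 : ∀ s, s ≤ t → g^[s] k = f^[s] k := by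
          intro s hs
          refine (iterSwitch g f k s ?_).symm
          intro u hu
          refine (hga _ (hpj u (by omega)) ?_).symm
          intro hc
          have := pinj u t (by omega) (by omega) hc
          omega
        have ht1 : g^[t+1] j = pt := by
          rw [Function.iterate_succ_apply, hgj, step1 t le_rfl]
        have hKt : t + 1 < K := by
          by_contra hc
          push_neg at hc
          have h1 : g^[K] j = f^[K-1] k := by
            conv_lhs => rw [show K = (K-1)+1 by omega]
            rw [Function.iterate_succ_apply, hgj, step1 (K-1) (by omega)]
          rw [hKeq] at h1
          exact hpj (K-1) (by omega) h1.symm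
        have ht2 : g^[t+2] j = f j := by
          rw [show t+2 = 1 + (t+1) by omega, Function.iterate_add_apply, ht1]
          simpa using hgpt
        have step2 : ∀ s, s ≤ K - (t+2) → g^[s] (f j) = f^[s] (f j) := by
          intro s hs
          refine iterSwitch f g (f j) s ?_
          intro u hu
          have he : g^[u] (f j) = g^[u + (t+2)] j := by
            rw [Function.iterate_add_apply, ht2]
          apply hga
          · rw [he]
            exact hKne _ (by omega) (by omega)
          · rw [he, ← ht1]
            intro hc
            have := hKdist _ _ (by omega) (by omega) hc
            omega
        have hfin : f^[K - (t+1)] j = j := by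
          have h1 : g^[K] j = g^[K-(t+2)] (g^[t+2] j) := by
            rw [← Function.iterate_add_apply, show (K-(t+2)) + (t+2) = K by omega]
          rw [hKeq, ht2, step2 _ le_rfl, ← Function.iterate_succ_apply] at h1
          rw [show K - (t+1) = K - (t+2) + 1 by omega]
          exact h1.symm
        apply hf.2
        refine ⟨j, hjJ, K - (t+1), by omega, ?_, hfin⟩
        intro s hs
        rcases Nat.eq_zero_or_pos s with h0 | h0
        · rw [h0]
          simpa using hjJ
        · have h1 : f^[s] j = g^[s-1+(t+2)] j := by
            conv_lhs => rw [show s = (s-1)+1 by omega]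
            rw [Function.iterate_succ_apply, ← step2 (s-1) (by omega),
              Function.iterate_add_apply, ht2]
          rw [h1]
          exact hKin _ (by omega)
      · by_cases hpo : ∃ u, u < K₀ ∧ g^[u] q = pt
        · -- the cycle passes through pt but not j
          obtain ⟨u, huK, hu⟩ := hpo
          have hnoj : ∀ s, g^[s] pt ≠ j := by
            intro s
            rw [← hu, ← Function.iterate_add_apply, iterMod g q hK₀ hqeq (s + u)]
            intro hc
            exact hjo ⟨(s + u) % K₀, Nat.mod_lt _ hK₀, hc⟩
          have hpteq : g^[K₀] pt = pt := by
            rw [← hu, ← Function.iterate_add_apply, Nat.add_comm K₀ u,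
              Function.iterate_add_apply, hqeq]
          have hptin : ∀ s, s < K₀ → g^[s] pt ∈ J := by
            intro s hs
            rw [← hu, ← Function.iterate_add_apply, iterMod g q hK₀ hqeq (s + u)]
            exact hinJ _ (Nat.mod_lt _ hK₀)
          obtain ⟨K, hK0, hKin, hKeq, hKne, hKdist⟩ := minCycle g J pt K₀ hK₀ hptin hpteq
          have step : ∀ s, s ≤ K - 1 → g^[s] (f j) = f^[s] (f j) := by
            intro s hs
            refine iterSwitch f g (f j) s ?_
            intro u' hu'
            have he : g^[u'] (f j) = g^[u'+1] pt := by
              rw [Function.iterate_succ_apply, hgpt]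
            apply hga
            · rw [he]
              exact hnoj _
            · rw [he]
              intro hc
              exact hKne (u'+1) (by omega) (by omega) hc
          have hfK : f^[K] j = pt := by
            have h1 : g^[K] pt = g^[K-1] (g pt) := by
              conv_lhs => rw [show K = (K-1)+1 by omega]
              rw [Function.iterate_succ_apply]
            rw [hKeq, hgpt, step (K-1) le_rfl, ← Function.iterate_succ_apply] at h1
            rw [show K = (K-1)+1 by omega]
            exact h1.symm
          apply hf.2
          refine ⟨j, hjJ, K + (m - t), by omega, ?_, ?_⟩
          · intro s hs
            rcases Nat.eq_zero_or_pos s with h0 | h0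
            · rw [h0]
              simpa using hjJ
            rcases Nat.lt_or_ge s K with hsK | hsK
            · have h1 : f^[s] j = g^[s] pt := by
                rw [show s = (s-1)+1 by omega, Function.iterate_succ_apply,
                  ← step (s-1) (by omega), ← hgpt, ← Function.iterate_succ_apply]
              rw [h1]
              exact hKin s hsK
            · have h1 : f^[s] j = f^[(s-K)+t] k := by
                conv_lhs => rw [show s = (s-K) + K by omega]
                rw [Function.iterate_add_apply, hfK, hptdef, ← Function.iterate_add_apply]
              rw [h1]
              exact hmin _ (by omega)
          · rw [show K + (m-t) = (m-t) + K by omega, Function.iterate_add_apply, hfK, hptdef,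
              ← Function.iterate_add_apply, show (m-t)+t = m by omega, hmeq]
        · -- the cycle avoids both j and pt
          have hsw : ∀ s, s ≤ K₀ → g^[s] q = f^[s] q := by
            intro s hs
            refine iterSwitch f g q s ?_
            intro u hu
            exact hga _ (fun hc => hjo ⟨u, by omega, hc⟩) (fun hc => hpo ⟨u, by omega, hc⟩)
          apply hf.2
          refine ⟨q, hqJ, K₀, hK₀, ?_, by rw [← hsw K₀ le_rfl, hqeq]⟩
          intro s hs
          rw [← hsw s (by omega)]
          exact hinJ s hs
    · -- dominance inequalities
      intro a haJ
      by_cases h1 : a = j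
      · subst h1
        rw [hgj]
        exact le_of_lt hle
      · by_cases h2 : a = pt
        · subst h2
          rw [hgpt]
          exact le_of_lt hvpt
        · rw [hga a h1 h2]
    · intro a ha
      exact absurd ha (Finset.notMem_empty a)
  · -- no path: update f j k is a J-circuit dominating f
    set g := Function.update f j k with hgdef
    have hgj : g j = k := Function.update_self j k f
    have hga : ∀ a, a ≠ j → g a = f a := fun a ha => Function.update_of_ne ha k f
    apply hund
    refine ⟨g, ⟨?_, ?_⟩, ⟨j, Finset.mem_union_left _ hjJ, by rw [hgj]; exact hkfj⟩, ?_, ?_⟩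
    · -- injectivity
      intro a ha b hb hab
      by_cases haj : a = j <;> by_cases hbj : b = j
      · rw [haj, hbj]
      · exfalso
        subst haj
        rw [hgj, hga b hbj] at hab
        exact hkne b (Finset.mem_coe.mp hb) hbj hab.symm
      · exfalso
        subst hbj
        rw [hga a haj, hgj] at hab
        exact hkne a (Finset.mem_coe.mp ha) haj hab
      · rw [hga a haj, hga b hbj] at hab
        exact hf.1 ha hb hab
    · -- no cycle
      intro hcyc
      obtain ⟨q, hqJ, K₀, hK₀, hinJ, hqeq⟩ := hcyc
      by_cases hjo : ∃ u, u < K₀ ∧ g^[u] q = j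
      · obtain ⟨u, huK, hu⟩ := hjo
        have hjeq : g^[K₀] j = j := by
          rw [← hu, ← Function.iterate_add_apply, Nat.add_comm K₀ u,
            Function.iterate_add_apply, hqeq]
        have hjin : ∀ s, s < K₀ → g^[s] j ∈ J := by
          intro s hs
          rw [← hu, ← Function.iterate_add_apply, iterMod g q hK₀ hqeq (s + u)]
          exact hinJ _ (Nat.mod_lt _ hK₀)
        obtain ⟨K, hK0, hKin, hKeq, hKne, hKdist⟩ := minCycle g J j K₀ hK₀ hjin hjeq
        have hK1 : 1 < K := by
          by_contra hc
          have hc1 : K = 1 := by omega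
          rw [hc1] at hKeq
          simp only [Function.iterate_one] at hKeq
          rw [hgj] at hKeq
          exact hkj hKeq
        have key : ∀ s, s ≤ K - 1 → g^[s] k = f^[s] k := by
          intro s hs
          refine iterSwitch f g k s ?_
          intro u hu
          apply hga
          have h1 : g^[u] k = g^[u+1] j := by
            rw [Function.iterate_succ_apply, hgj]
          rw [h1]
          intro hc
          exact hKne (u + 1) (by omega) (by omega) hc
        apply hpath
        have hlast : g^[K-1] k = g^[K] j := by
          conv_rhs => rw [show K = (K-1)+1 by omega]
          rw [Function.iterate_succ_apply, hgj]
        refine ⟨K - 1, ?_, ?_⟩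
        · intro s hs
          rcases Nat.lt_or_ge s (K - 1) with h | h
          · rw [← key s (by omega)]
            have h2 : g^[s] k = g^[s+1] j := by
              rw [Function.iterate_succ_apply, hgj]
            rw [h2]
            exact hKin _ (by omega)
          · have hsK : s = K - 1 := by omega
            rw [hsK, ← key _ le_rfl, hlast, hKeq]
            exact hjJ
        · rw [← key _ le_rfl, hlast, hKeq]
      · have hsw : ∀ s, s ≤ K₀ → g^[s] q = f^[s] q := by
          intro s hs
          refine iterSwitch f g q s ?_
          intro u hu
          exact hga _ (fun hc => hjo ⟨u, by omega, hc⟩)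
        apply hf.2
        refine ⟨q, hqJ, K₀, hK₀, ?_, by rw [← hsw K₀ le_rfl, hqeq]⟩
        intro s hs
        rw [← hsw s (by omega)]
        exact hinJ s hs
    · -- dominance inequalities
      intro a haJ
      by_cases haj : a = j
      · subst haj
        rw [hgj]
        exact le_of_lt hle
      · rw [hga a haj]
    · intro a ha
      exact absurd ha (Finset.notMem_empty a)
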